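/- A simple graph G on [n] is closed with respect to the given labeling if and only if for any two distinct vertices i, j, every path of shortest length from i to j in G is directed in the associated orientation G* (where each edge {a,b} with a<b is oriented from a to b); here a path v0,v1,...,vl is directed if either v_k < v_{k+1} for all k or v_k > v_{k+1} for all k. -/

import Mathlib

/-- A simple graph on `Fin n` is *closed with respect to the given labeling*. -/
def SimpleGraph.IsClosed {n : ℕ} (G : SimpleGraph (Fin n)) : Prop :=
  ∀ ⦃i j k l : Fin n⦄, G.Adj i j → G.Adj k l → i < j → k < l →
    (i = k → j ≠ l → G.Adj j l) ∧ (j = l → i ≠ k → G.Adj i k)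

/-- A walk is *directed* (in the orientation `G*` where each edge `{a,b}` with `a < b`
is oriented from `a` to `b`) if its vertices are strictly increasing or strictly
decreasing along the walk. -/
def SimpleGraph.Walk.IsDirected {n : ℕ} {G : SimpleGraph (Fin n)} {i j : Fin n}
    (p : G.Walk i j) : Prop :=
  List.Chain' (· < ·) p.support ∨ List.Chain' (· > ·) p.support

open SimpleGraph.Walk

lemma aux_closed_directed {n : ℕ} {G : SimpleGraph (Fin n)} (hG : G.IsClosed) :
    ∀ {i j : Fin n} (p : G.Walk i j), p.IsPath →
      (∀ q : G.Walk i j, p.length ≤ q.length) → p.IsDirected := by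
  intro i j p
  induction p with
  | nil => intro _ _; left; simp [List.Chain']
  | @cons u v w h q ih =>
    intro hp hmin
    have hq : q.IsPath := hp.of_cons
    have hnotmem : u ∉ q.support := ((cons_isPath_iff h q).mp hp).2
    have hqmin : ∀ r : G.Walk v w, q.length ≤ r.length := by
      intro r
      have := hmin (cons h r)
      simpa using this
    have hqd := ih hq hqmin
    cases q with
    | nil =>
      rcases lt_or_gt_of_ne h.ne with h1 | h1
      · left; simp [List.Chain', h1]
      · right; simp [List.Chain', h1]
    | @cons v x w h2 q2 =>
      have hsup : (cons h2 q2).support = v :: x :: q2.support.tail := by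
        rw [support_cons]; congr 1; exact q2.support_eq_cons
      have hux : u ≠ x := by
        intro he
        exact hnotmem (by rw [support_cons]
                          exact List.mem_cons_of_mem _ (he ▸ q2.start_mem_support))
      rcases lt_or_gt_of_ne h.ne with h1 | h1
      · rcases hqd with hc | hc
        · left
          rw [support_cons]
          exact List.isChain_cons_cons.mpr ⟨h1, hc⟩
        · -- u < v, v > x : local max, shortcut
          rw [hsup] at hc
          have hxv : x < v := (List.isChain_cons_cons.mp hc).1
          have hax : G.Adj u x := (hG h h2.symm h1 hxv).2 rfl hux
          exfalso
          have := hmin (cons hax q2)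
          simp only [length_cons] at this
          omega
      · rcases hqd with hc | hc
        · -- u > v, v < x : local min, shortcut
          rw [hsup] at hc
          have hvx : v < x := (List.isChain_cons_cons.mp hc).1
          have hax : G.Adj u x := (hG h.symm h2 h1 hvx).1 rfl hux
          exfalso
          have := hmin (cons hax q2)
          simp only [length_cons] at this
          omega
        · right
          rw [support_cons]
          exact List.isChain_cons_cons.mpr ⟨h1, hc⟩

/-- `G` is closed with respect to the given labeling if and only if for any two distinct
vertices `i`, `j`, every path of shortest length from `i` to `j` is directed in the
associated orientation `G*`. -/
theorem closed_iff_shortest_paths_directed {n : ℕ} (G : SimpleGraph (Fin n)) :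
    G.IsClosed ↔
      ∀ (i j : Fin n), i ≠ j → ∀ p : G.Walk i j, p.IsPath →
        (∀ q : G.Walk i j, p.length ≤ q.length) → p.IsDirected := by
  constructor
  · intro hG i j _ p hp hmin
    exact aux_closed_directed hG p hp hmin
  · intro h i j k l hij hkl hltij hltkl
    constructor
    · rintro rfl hjl
      -- edges i–j and i–l with i < j, i < l, j ≠ l; show Adj j l
      by_contra hadj
      set p : G.Walk j l := cons hij.symm (cons hkl nil) with hpdef
      have hpath : p.IsPath := by
        simp [hpdef, cons_isPath_iff, hij.ne', hkl.ne, hjl]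
      have hmin : ∀ q : G.Walk j l, p.length ≤ q.length := by
        intro q
        cases q with
        | nil => exact absurd rfl hjl
        | cons h' q' =>
          cases q' with
          | nil => exact absurd h' hadj
          | cons h'' q'' => simp [hpdef, length_cons]
      have hd := h j l hjl p hpath hmin
      rcases hd with hc | hc
      · simp [hpdef, support_cons, List.Chain', List.isChain_cons_cons] at hc
        exact absurd hc.1 (not_lt.mpr hltij.le)
      · simp [hpdef, support_cons, List.Chain', List.isChain_cons_cons] at hc
        exact absurd hc.2 (not_lt.mpr hltkl.le)
    · rintro rfl hik
      -- edges i–j and k–j with i < j, k < j, i ≠ k; show Adj i k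
      by_contra hadj
      set p : G.Walk i k := cons hij (cons hkl.symm nil) with hpdef
      have hpath : p.IsPath := by
        simp [hpdef, cons_isPath_iff, hij.ne, hkl.ne', hik]
      have hmin : ∀ q : G.Walk i k, p.length ≤ q.length := by
        intro q
        cases q with
        | nil => exact absurd rfl hik
        | cons h' q' =>
          cases q' with
          | nil => exact absurd h' hadj
          | cons h'' q'' => simp [hpdef, length_cons]
      have hd := h i k hik p hpath hmin
      rcases hd with hc | hc
      · simp [hpdef, support_cons, List.Chain', List.isChain_cons_cons] at hc
        exact absurd hc.2 (not_lt.mpr hltkl.le)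
      · simp [hpdef, support_cons, List.Chain', List.isChain_cons_cons] at hc
        exact absurd hc.1 (not_lt.mpr hltij.le)
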